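/- Let n, k be natural numbers with k ≥ 1, and let κ, μ : Fin n → ℝ satisfy κ_α · κ_β = μ_α · μ_β for all indices α ≠ β. Then |σ_{2k+1}(κ)| = |σ_{2k+1}(μ)|, i.e. each odd elementary symmetric function σ_{2k+1} with k ≥ 1 is determined up to sign by the pairwise products of distinct entries. -/

import Mathlib

/-- The `m`-th elementary symmetric function of the family `κ : Fin n → ℝ`:
the sum over all `m`-element subsets `S` of `Fin n` of `∏ i ∈ S, κ i`. -/
noncomputable def esymmFun (n m : ℕ) (κ : Fin n → ℝ) : ℝ :=
  ∑ S ∈ Finset.powersetCard m (Finset.univ : Finset (Fin n)), ∏ i ∈ S, κ i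

lemma esymm_zero_of_pairwise (n m : ℕ) (f : Fin n → ℝ) (hm : 2 ≤ m)
    (hf : ∀ α β : Fin n, α ≠ β → f α * f β = 0) : esymmFun n m f = 0 := by
  unfold esymmFun
  apply Finset.sum_eq_zero
  intro S hS
  rw [Finset.mem_powersetCard] at hS
  obtain ⟨a, ha, b, hb, hab⟩ := Finset.one_lt_card.mp (by omega : 1 < S.card)
  rcases mul_eq_zero.mp (hf a b hab) with h0 | h0
  · exact Finset.prod_eq_zero ha h0
  · exact Finset.prod_eq_zero hb h0

lemma esymm_zero_of_two (n m : ℕ) (f : Fin n → ℝ) (α β : Fin n) (hm : 3 ≤ m)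
    (hf : ∀ γ : Fin n, γ ≠ α → γ ≠ β → f γ = 0) : esymmFun n m f = 0 := by
  unfold esymmFun
  apply Finset.sum_eq_zero
  intro S hS
  rw [Finset.mem_powersetCard] at hS
  have hne : (S \ ({α, β} : Finset (Fin n))).Nonempty := by
    rw [Finset.nonempty_iff_ne_empty]
    intro he
    have hsub : S ⊆ {α, β} := Finset.sdiff_eq_empty_iff_subset.mp he
    have := Finset.card_le_card hsub
    have : ({α, β} : Finset (Fin n)).card ≤ 2 := Finset.card_insert_le _ _ |>.trans (by simp)
    omega
  obtain ⟨c, hc⟩ := hne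
  rw [Finset.mem_sdiff, Finset.mem_insert, Finset.mem_singleton] at hc
  push_neg at hc
  exact Finset.prod_eq_zero hc.1 (hf c hc.2.1 hc.2.2)

lemma esymm_smul (n m : ℕ) (c : ℝ) (f : Fin n → ℝ) :
    esymmFun n m (fun i => c * f i) = c ^ m * esymmFun n m f := by
  unfold esymmFun
  rw [Finset.mul_sum]
  refine Finset.sum_congr rfl fun S hS => ?_
  rw [Finset.mem_powersetCard] at hS
  rw [Finset.prod_mul_distrib, Finset.prod_const, hS.2]

theorem stmt_4 (n k : ℕ) (hk : 1 ≤ k) (κ μ : Fin n → ℝ)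
    (h : ∀ α β : Fin n, α ≠ β → κ α * κ β = μ α * μ β) :
    |esymmFun n (2 * k + 1) κ| = |esymmFun n (2 * k + 1) μ| := by
  by_cases hex : ∃ α β : Fin n, α ≠ β ∧ κ α ≠ 0 ∧ κ β ≠ 0
  · obtain ⟨α, β, hab, hκα, hκβ⟩ := hex
    have hμβ : μ β ≠ 0 := by
      intro h0
      have h1 := h α β hab
      rw [h0, mul_zero] at h1
      exact mul_ne_zero hκα hκβ h1
    obtain ⟨ε, hε⟩ : ∃ ε : ℝ, ε = κ β / μ β := ⟨_, rfl⟩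
    have hεne : ε ≠ 0 := hε ▸ div_ne_zero hκβ hμβ
    have hform : ∀ i : Fin n, i ≠ β → μ i = ε * κ i := by
      intro i hi
      have h1 := h i β hi
      rw [hε, div_mul_eq_mul_div, eq_div_iff hμβ]
      nlinarith [h1]
    by_cases hγ : ∃ γ : Fin n, γ ≠ α ∧ γ ≠ β ∧ κ γ ≠ 0
    · obtain ⟨γ, hγα, hγβ, hκγ⟩ := hγ
      have hε2 : ε ^ 2 = 1 := by
        have h1 := h γ α hγα
        have h2 := hform γ hγβ
        have h3 := hform α hab
        have h4 : κ γ * κ α ≠ 0 := mul_ne_zero hκγ hκα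
        rw [h2, h3] at h1
        have h5 : (ε ^ 2 - 1) * (κ γ * κ α) = 0 := by nlinarith [h1]
        rcases mul_eq_zero.mp h5 with h6 | h6
        · linarith
        · exact absurd h6 h4
      have hμβε : μ β = ε * κ β := by
        have h1 : ε * μ β = κ β := by rw [hε]; exact div_mul_cancel₀ _ hμβ
        calc μ β = ε ^ 2 * μ β := by rw [hε2]; ring
        _ = ε * (ε * μ β) := by ring
        _ = ε * κ β := by rw [h1]
      have hμeq : μ = fun i => ε * κ i := by
        funext i
        by_cases hi : i = β
        · rw [hi]; exact hμβε
        · exact hform i hi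
      rw [hμeq, esymm_smul, abs_mul, abs_pow]
      have habs : |ε| = 1 := by nlinarith [sq_abs ε, abs_nonneg ε, hε2]
      rw [habs, one_pow, one_mul]
    · push_neg at hγ
      have hκ0 : esymmFun n (2 * k + 1) κ = 0 :=
        esymm_zero_of_two n _ κ α β (by omega) hγ
      have hμ0 : esymmFun n (2 * k + 1) μ = 0 := by
        refine esymm_zero_of_two n _ μ α β (by omega) fun c hcα hcβ => ?_
        have h1 := h c β hcβ
        rw [hγ c hcα hcβ, zero_mul] at h1
        rcases mul_eq_zero.mp h1.symm with h0 | h0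
        · exact h0
        · exact absurd h0 hμβ
      rw [hκ0, hμ0]
  · push_neg at hex
    have hκ0 : esymmFun n (2 * k + 1) κ = 0 := by
      refine esymm_zero_of_pairwise n _ κ (by omega) fun a b hab => ?_
      by_cases h0 : κ a = 0
      · simp [h0]
      · simp [hex a b hab h0]
    have hμ0 : esymmFun n (2 * k + 1) μ = 0 := by
      refine esymm_zero_of_pairwise n _ μ (by omega) fun a b hab => ?_
      rw [← h a b hab]
      by_cases h0 : κ a = 0
      · simp [h0]
      · simp [hex a b hab h0]
    rw [hκ0, hμ0]
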